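/- arXiv:2303.12558 — 2 statements merged into one kernel-verified Lean document; each statement's English description precedes it below -/
import Mathlib

section
/- Let (X, d) be a complete separable (Polish) metric space, Z a standard Borel space, G : Z → X a Borel measurable map, P a probability measure on X, and ν a probability measure on Z. Then the Wasserstein distance between P and the pushforward measure G_*ν satisfies W_d(P, G_*ν) = inf over all Markov kernels q from X to Z whose P-mixture equals ν (i.e., ∫_X q(·|x) dP(x) = ν) of ∫_X ∫_Z d(x, G(z)) q(dz|x) P(dx), where both sides are taken in [0, ∞]. -/
open MeasureTheory ProbabilityTheory ENNReal Filter

/-- The Wasserstein "distance" between two measures w.r.t. a cost `d`,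
defined as the infimum over couplings (probability measures on the product
with the prescribed marginals) of the transport cost, valued in `[0, ∞]`. -/
noncomputable def wasserstein {X : Type*} [MeasurableSpace X]
    (d : X → X → ℝ) (P Q : Measure X) : ℝ≥0∞ :=
  ⨅ γ ∈ {γ : Measure (X × X) |
      IsProbabilityMeasure γ ∧ γ.map Prod.fst = P ∧ γ.map Prod.snd = Q},
    ∫⁻ p, ENNReal.ofReal (d p.1 p.2) ∂γ

lemma bind_eq_snd_compProd {α β : Type*} [MeasurableSpace α] [MeasurableSpace β]
    (μ : Measure α) [SFinite μ] (κ : ProbabilityTheory.Kernel α β) [IsSFiniteKernel κ] :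
    μ.bind (fun x => κ x) = (μ ⊗ₘ κ).snd := by
  ext s hs
  rw [Measure.bind_apply hs κ.measurable.aemeasurable, Measure.snd_apply hs,
    Measure.compProd_apply (measurable_snd hs)]
  rfl

/-- **Deterministic-decoder optimal transport factorization.**
For a Polish metric space `X`, a standard Borel latent space `Z`, a Borel
measurable decoder `G : Z → X`, a data distribution `P` and a latent prior `ν`,
the Wasserstein distance between `P` and the pushforward `G_*ν` equals the
infimum, over Markov kernels (encoders) `q` from `X` to `Z` whose `P`-mixture
is `ν`, of the expected reconstruction cost `∫ ∫ d(x, G z) q(dz|x) P(dx)`. -/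
theorem wasserstein_deterministic_decoder
    {X Z : Type*} [MetricSpace X] [CompleteSpace X] [SecondCountableTopology X]
    [MeasurableSpace X] [BorelSpace X]
    [MeasurableSpace Z] [StandardBorelSpace Z]
    (G : Z → X) (hG : Measurable G)
    (P : Measure X) [IsProbabilityMeasure P]
    (ν : Measure Z) [IsProbabilityMeasure ν] :
    wasserstein dist P (ν.map G) =
      ⨅ q ∈ {q : Kernel X Z | IsMarkovKernel q ∧ P.bind (fun x => q x) = ν},
        ∫⁻ x, ∫⁻ z, ENNReal.ofReal (dist x (G z)) ∂(q x) ∂P := by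
  have hf1 : Measurable fun p : X × X => ENNReal.ofReal (dist p.1 p.2) :=
    (measurable_fst.dist measurable_snd).ennreal_ofReal
  have hf2 : Measurable fun p : X × Z => ENNReal.ofReal (dist p.1 (G p.2)) :=
    (measurable_fst.dist (hG.comp measurable_snd)).ennreal_ofReal
  have hf3 : Measurable fun p : Z × X => ENNReal.ofReal (dist p.2 (G p.1)) :=
    (measurable_snd.dist (hG.comp measurable_fst)).ennreal_ofReal
  apply le_antisymm
  · -- wasserstein ≤ infimum over encoders
    refine le_iInf₂ fun q hq => ?_
    obtain ⟨hqM, hqν⟩ := hq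
    haveI := hqM
    have hm : Measurable (Prod.map (id : X → X) G) := measurable_id.prodMap hG
    set γ : Measure (X × X) := (P ⊗ₘ q).map (Prod.map id G) with hγdef
    haveI : IsProbabilityMeasure γ := Measure.isProbabilityMeasure_map hm.aemeasurable
    have h1 : γ.map Prod.fst = P := by
      rw [hγdef, Measure.map_map measurable_fst hm]
      have : (Prod.fst ∘ Prod.map (id : X → X) G) = Prod.fst := rfl
      rw [this]
      exact Measure.fst_compProd P q
    have h2 : γ.map Prod.snd = ν.map G := by
      rw [hγdef, Measure.map_map measurable_snd hm]
      have : (Prod.snd ∘ Prod.map (id : X → X) G) = G ∘ Prod.snd := rfl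
      rw [this, ← Measure.map_map hG measurable_snd]
      have hsnd : (P ⊗ₘ q).map Prod.snd = ν := by
        rw [show (P ⊗ₘ q).map Prod.snd = (P ⊗ₘ q).snd from rfl,
          ← bind_eq_snd_compProd, hqν]
      rw [hsnd]
    refine iInf₂_le_of_le γ ⟨inferInstance, h1, h2⟩ (le_of_eq ?_)
    rw [hγdef, lintegral_map hf1 hm]
    simp only [Prod.map_fst, Prod.map_snd, id_eq]
    exact Measure.lintegral_compProd hf2
  · -- infimum over encoders ≤ wasserstein
    refine le_iInf₂ fun γ hγ => ?_
    obtain ⟨hγP, h1, h2⟩ := hγ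
    haveI := hγP
    have hXne : Nonempty X := by
      by_contra h
      rw [not_nonempty_iff] at h
      have h1 := measure_univ (μ := P)
      rw [Set.univ_eq_empty_iff.mpr h] at h1
      simp at h1
    have hZne : Nonempty Z := by
      by_contra h
      rw [not_nonempty_iff] at h
      have h1 := measure_univ (μ := ν)
      rw [Set.univ_eq_empty_iff.mpr h] at h1
      simp at h1
    set μ₂ : Measure (X × X) := γ.map Prod.swap with hμ₂def
    haveI : IsProbabilityMeasure μ₂ :=
      Measure.isProbabilityMeasure_map measurable_swap.aemeasurable
    have hμ₂fst : μ₂.fst = ν.map G := by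
      rw [Measure.fst, hμ₂def, Measure.map_map measurable_fst measurable_swap]
      exact h2
    have hμ₂snd : μ₂.snd = P := by
      rw [Measure.snd, hμ₂def, Measure.map_map measurable_snd measurable_swap]
      exact h1
    set κ : Kernel X X := μ₂.condKernel with hκdef
    have hdis : μ₂.fst ⊗ₘ κ = μ₂ := μ₂.disintegrate κ
    haveI : IsMarkovKernel (κ.comap G hG) := Kernel.IsMarkovKernel.comap κ hG
    set ρ : Measure (Z × X) := ν ⊗ₘ (κ.comap G hG) with hρdef
    have hρsnd : ρ.snd = P := by
      rw [← hμ₂snd]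
      ext s hs
      rw [Measure.snd_apply hs, Measure.snd_apply hs,
        Measure.compProd_apply (measurable_snd hs), ← hdis,
        Measure.compProd_apply (measurable_snd hs), hμ₂fst]
      simp only [show ∀ a : Z, Prod.mk a ⁻¹' (Prod.snd ⁻¹' s) = s from fun _ => rfl,
        show ∀ a : X, Prod.mk a ⁻¹' (Prod.snd ⁻¹' s) = s from fun _ => rfl,
        Kernel.comap_apply]
      exact (lintegral_map (κ.measurable_coe hs) hG).symm
    set η : Measure (X × Z) := ρ.map Prod.swap with hηdef
    haveI : IsProbabilityMeasure η :=
      Measure.isProbabilityMeasure_map measurable_swap.aemeasurable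
    have hηfst : η.fst = P := by
      rw [Measure.fst, hηdef, Measure.map_map measurable_fst measurable_swap]
      exact hρsnd
    have hηsnd : η.snd = ν := by
      rw [Measure.snd, hηdef, Measure.map_map measurable_snd measurable_swap]
      exact Measure.fst_compProd ν _
    set q : Kernel X Z := η.condKernel with hqdef
    have hdis2 : P ⊗ₘ q = η := by rw [← hηfst]; exact η.disintegrate q
    have hmix : P.bind (fun x => q x) = ν := by
      rw [bind_eq_snd_compProd, hdis2, hηsnd]
    refine iInf₂_le_of_le q ⟨inferInstance, hmix⟩ (le_of_eq ?_)
    calc ∫⁻ x, ∫⁻ z, ENNReal.ofReal (dist x (G z)) ∂(q x) ∂P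
        = ∫⁻ p : X × Z, ENNReal.ofReal (dist p.1 (G p.2)) ∂(P ⊗ₘ q) :=
          (Measure.lintegral_compProd hf2).symm
      _ = ∫⁻ p : Z × X, ENNReal.ofReal (dist p.2 (G p.1)) ∂ρ := by
          rw [hdis2, hηdef, lintegral_map hf2 measurable_swap]
          rfl
      _ = ∫⁻ z, ∫⁻ x, ENNReal.ofReal (dist x (G z)) ∂(κ (G z)) ∂ν := by
          rw [hρdef, Measure.lintegral_compProd hf3]
          simp [Kernel.comap_apply]
      _ = ∫⁻ y, ∫⁻ x, ENNReal.ofReal (dist x y) ∂(κ y) ∂(ν.map G) := by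
          rw [lintegral_map _ hG]
          exact Measurable.lintegral_kernel_prod_right
            (f := fun y x => ENNReal.ofReal (dist x y))
            ((measurable_snd.dist measurable_fst).ennreal_ofReal)
      _ = ∫⁻ p : X × X, ENNReal.ofReal (dist p.2 p.1) ∂μ₂ := by
          rw [← hdis, hμ₂fst, Measure.lintegral_compProd
            ((measurable_snd.dist measurable_fst).ennreal_ofReal)]
      _ = ∫⁻ p : X × X, ENNReal.ofReal (dist p.1 p.2) ∂γ := by
          rw [hμ₂def, lintegral_map
            ((measurable_snd.dist measurable_fst).ennreal_ofReal) measurable_swap]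
          rfl
end

section
/- Let X be a standard Borel space, (Y, d) a compact metric space, ξ a probability measure on X, and P, Q Markov kernels from X to Y. For probability measures p, q on Y write W*_d(p, q) = sup { ∫ f dp − ∫ f dq : f : Y → ℝ is 1-Lipschitz with respect to d }. Then the map x ↦ W*_d(P(·|x), Q(·|x)) is measurable, and ∫_X W*_d(P(·|x), Q(·|x)) dξ(x) = sup over all jointly measurable functions Φ : X × Y → ℝ such that Φ(x, ·) is 1-Lipschitz with respect to d for every x ∈ X, of ∫_X ( ∫_Y Φ(x, y) P(dy | x) − ∫_Y Φ(x, y) Q(dy | x) ) dξ(x). -/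
open MeasureTheory ProbabilityTheory Filter

/-- The dual (Kantorovich–Rubinstein) form of the Wasserstein distance:
the supremum, over `1`-Lipschitz functions `f`, of `∫ f dp − ∫ f dq`. -/
noncomputable def wassersteinDual {Y : Type*} [MetricSpace Y] [MeasurableSpace Y]
    (p q : Measure Y) : ℝ :=
  sSup {r : ℝ | ∃ f : Y → ℝ,
    (∀ y₁ y₂, f y₁ - f y₂ ≤ dist y₁ y₂) ∧
    r = (∫ y, f y ∂p) - ∫ y, f y ∂q}

section Aux

variable {Y : Type*} [MetricSpace Y] [CompactSpace Y] [MeasurableSpace Y] [BorelSpace Y]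

lemma WD.lip {f : Y → ℝ} (hf : ∀ y₁ y₂, f y₁ - f y₂ ≤ dist y₁ y₂) : LipschitzWith 1 f := by
  refine LipschitzWith.of_dist_le_mul fun y₁ y₂ => ?_
  rw [Real.dist_eq, NNReal.coe_one, one_mul]
  exact abs_sub_le_iff.2 ⟨hf y₁ y₂, dist_comm y₁ y₂ ▸ hf y₂ y₁⟩

lemma WD.lip_prop {f : Y → ℝ} (hf : LipschitzWith 1 f) (y₁ y₂ : Y) :
    f y₁ - f y₂ ≤ dist y₁ y₂ := by
  calc f y₁ - f y₂ ≤ |f y₁ - f y₂| := le_abs_self _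
  _ = dist (f y₁) (f y₂) := (Real.dist_eq _ _).symm
  _ ≤ dist y₁ y₂ := by simpa using hf.dist_le_mul y₁ y₂

lemma WD.integrable [Nonempty Y] {f : Y → ℝ} (hf : LipschitzWith 1 f) (p : Measure Y)
    [IsFiniteMeasure p] : Integrable f p := by
  obtain ⟨ymax, -, hymax⟩ := isCompact_univ.exists_isMaxOn Set.univ_nonempty
    (continuous_abs.comp hf.continuous).continuousOn
  exact Integrable.mono' (integrable_const (|f ymax|)) hf.continuous.aestronglyMeasurable
    (Filter.Eventually.of_forall fun y => by
      simpa [Real.norm_eq_abs] using hymax (Set.mem_univ y))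

lemma WD.bound [Nonempty Y] {f : Y → ℝ} (hf : ∀ y₁ y₂, f y₁ - f y₂ ≤ dist y₁ y₂)
    (p q : Measure Y) [IsProbabilityMeasure p] [IsProbabilityMeasure q] :
    (∫ y, f y ∂p) - ∫ y, f y ∂q ≤ 2 * Metric.diam (Set.univ : Set Y) := by
  obtain ⟨y₀⟩ := ‹Nonempty Y›
  set D := Metric.diam (Set.univ : Set Y) with hD
  have hd : ∀ y : Y, dist y y₀ ≤ D := fun y =>
    Metric.dist_le_diam_of_mem isCompact_univ.isBounded (Set.mem_univ _) (Set.mem_univ _)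
  have h1 : ∫ y, f y ∂p ≤ f y₀ + D := by
    calc ∫ y, f y ∂p ≤ ∫ _, (f y₀ + D) ∂p :=
          integral_mono (WD.integrable (WD.lip hf) p) (integrable_const _)
            (fun y => by have h := hf y y₀; have := hd y; dsimp only; linarith)
    _ = f y₀ + D := by simp
  have h2 : f y₀ - D ≤ ∫ y, f y ∂q := by
    have hmono : (∫ _, (f y₀ - D) ∂q) ≤ ∫ y, f y ∂q :=
      integral_mono (integrable_const _) (WD.integrable (WD.lip hf) q)
        (fun y => by
          have h := hf y₀ y
          have := hd y
          rw [dist_comm] at this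
          dsimp only; linarith)
    simpa using hmono
  linarith

lemma WD.zero_mem (p q : Measure Y) :
    (0 : ℝ) ∈ {r : ℝ | ∃ f : Y → ℝ, (∀ y₁ y₂, f y₁ - f y₂ ≤ dist y₁ y₂) ∧
      r = (∫ y, f y ∂p) - ∫ y, f y ∂q} :=
  ⟨fun _ => 0, fun _ _ => by simpa using dist_nonneg, by simp⟩

lemma WD.bddAbove [Nonempty Y] (p q : Measure Y) [IsProbabilityMeasure p]
    [IsProbabilityMeasure q] :
    BddAbove {r : ℝ | ∃ f : Y → ℝ, (∀ y₁ y₂, f y₁ - f y₂ ≤ dist y₁ y₂) ∧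
      r = (∫ y, f y ∂p) - ∫ y, f y ∂q} := by
  refine ⟨2 * Metric.diam (Set.univ : Set Y), ?_⟩
  rintro r ⟨f, hf, rfl⟩
  exact WD.bound hf p q

lemma WD.nonneg [Nonempty Y] (p q : Measure Y) [IsProbabilityMeasure p]
    [IsProbabilityMeasure q] : 0 ≤ wassersteinDual p q :=
  le_csSup (WD.bddAbove p q) (WD.zero_mem p q)

lemma WD.le_two_diam [Nonempty Y] (p q : Measure Y) [IsProbabilityMeasure p]
    [IsProbabilityMeasure q] :
    wassersteinDual p q ≤ 2 * Metric.diam (Set.univ : Set Y) := by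
  refine csSup_le ⟨0, WD.zero_mem p q⟩ ?_
  rintro r ⟨f, hf, rfl⟩
  exact WD.bound hf p q

lemma WD.mem_le [Nonempty Y] (p q : Measure Y) [IsProbabilityMeasure p]
    [IsProbabilityMeasure q] {f : Y → ℝ} (hf : ∀ y₁ y₂, f y₁ - f y₂ ≤ dist y₁ y₂) :
    (∫ y, f y ∂p) - ∫ y, f y ∂q ≤ wassersteinDual p q :=
  le_csSup (WD.bddAbove p q) ⟨f, hf, rfl⟩

end Aux

/-- **Expected conditional dual Wasserstein distance as a single supremum.**
For a standard Borel input space `X`, a compact metric output space `Y`,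
a probability measure `ξ` on `X` and Markov kernels `P, Q` from `X` to `Y`,
the map `x ↦ W*_d(P(·|x), Q(·|x))` is measurable and its `ξ`-expectation
equals the supremum, over jointly measurable `Φ : X × Y → ℝ` whose sections
`Φ(x, ·)` are all `1`-Lipschitz, of
`∫ (∫ Φ(x,·) dP(·|x) − ∫ Φ(x,·) dQ(·|x)) dξ`. -/
theorem lintegral_wassersteinDual_eq_iSup
    {X Y : Type*} [MeasurableSpace X] [StandardBorelSpace X]
    [MetricSpace Y] [CompactSpace Y] [MeasurableSpace Y] [BorelSpace Y]
    (ξ : Measure X) [IsProbabilityMeasure ξ]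
    (P Q : Kernel X Y) [IsMarkovKernel P] [IsMarkovKernel Q] :
    Measurable (fun x => wassersteinDual (P x) (Q x)) ∧
    ∫ x, wassersteinDual (P x) (Q x) ∂ξ =
      sSup {r : ℝ | ∃ Φ : X × Y → ℝ, Measurable Φ ∧
        (∀ x, ∀ y₁ y₂, Φ (x, y₁) - Φ (x, y₂) ≤ dist y₁ y₂) ∧
        r = ∫ x, ((∫ y, Φ (x, y) ∂(P x)) - ∫ y, Φ (x, y) ∂(Q x)) ∂ξ} := by
  classical
  -- nonemptiness
  have hXne : Nonempty X := by
    by_contra h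
    rw [not_nonempty_iff] at h
    have h1 := measure_univ (μ := ξ)
    rw [Set.univ_eq_empty_iff.2 h, measure_empty] at h1
    exact zero_ne_one h1
  obtain ⟨x₀⟩ := hXne
  have hYne : Nonempty Y := by
    by_contra h
    rw [not_nonempty_iff] at h
    have h1 := measure_univ (μ := P x₀)
    rw [Set.univ_eq_empty_iff.2 h, measure_empty] at h1
    exact zero_ne_one h1
  set D := Metric.diam (Set.univ : Set Y) with hDdef
  have hD0 : 0 ≤ D := Metric.diam_nonneg
  -- a dense sequence of 1-Lipschitz functions
  haveI : Nonempty {f : C(Y, ℝ) | LipschitzWith 1 f} :=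
    ⟨⟨ContinuousMap.const Y 0, (LipschitzWith.const' (0 : ℝ)).weaken zero_le_one⟩⟩
  obtain ⟨u, hu⟩ := TopologicalSpace.exists_dense_seq {f : C(Y, ℝ) | LipschitzWith 1 f}
  set v : ℕ → Y → ℝ := fun n => ((u n : C(Y, ℝ)) : Y → ℝ) with hvdef
  have hv_lip : ∀ n, LipschitzWith 1 (v n) := fun n => (u n).2
  have hv_prop : ∀ n, ∀ y₁ y₂, v n y₁ - v n y₂ ≤ dist y₁ y₂ := fun n => WD.lip_prop (hv_lip n)
  -- approximation
  have approx : ∀ (f : Y → ℝ), (∀ y₁ y₂, f y₁ - f y₂ ≤ dist y₁ y₂) → ∀ δ : ℝ, 0 < δ →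
      ∃ n, ∀ y, |f y - v n y| ≤ δ := by
    intro f hf δ hδ
    have hlf := WD.lip hf
    set F : C(Y, ℝ) := ⟨f, hlf.continuous⟩ with hF
    have hFS : F ∈ {g : C(Y, ℝ) | LipschitzWith 1 g} := hlf
    obtain ⟨n, hn⟩ := Metric.denseRange_iff.1 hu (⟨F, hFS⟩ : {g : C(Y, ℝ) | LipschitzWith 1 g}) δ hδ
    rw [Subtype.dist_eq] at hn
    refine ⟨n, fun y => ?_⟩
    have h1 : dist (F y) ((u n : C(Y, ℝ)) y) ≤ dist F (u n : C(Y, ℝ)) :=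
      ContinuousMap.dist_apply_le_dist y
    have : |f y - v n y| = dist (F y) ((u n : C(Y, ℝ)) y) := (Real.dist_eq _ _).symm
    rw [this]
    exact h1.trans hn.le
  -- pointwise: the dual Wasserstein distance is a countable sup
  have key : ∀ (p q : Measure Y), IsProbabilityMeasure p → IsProbabilityMeasure q →
      wassersteinDual p q = ⨆ n, ((∫ y, v n y ∂p) - ∫ y, v n y ∂q) := by
    intro p q hp hq
    haveI := hp; haveI := hq
    have hGbdd : BddAbove (Set.range fun n => (∫ y, v n y ∂p) - ∫ y, v n y ∂q) := by
      refine ⟨2 * D, ?_⟩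
      rintro r ⟨n, rfl⟩
      exact WD.bound (hv_prop n) p q
    refine le_antisymm ?_ (ciSup_le fun n => WD.mem_le p q (hv_prop n))
    refine csSup_le ⟨0, WD.zero_mem p q⟩ ?_
    rintro r ⟨f, hf, rfl⟩
    refine le_of_forall_pos_le_add fun ε hε => ?_
    obtain ⟨n, hn⟩ := approx f hf (ε / 2) (by linarith)
    have hintf := WD.integrable (WD.lip hf) (p := p)
    have hintf' := WD.integrable (WD.lip hf) (p := q)
    have hintv := WD.integrable (hv_lip n) (p := p)
    have hintv' := WD.integrable (hv_lip n) (p := q)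
    have h1 : ∫ y, f y ∂p ≤ (∫ y, v n y ∂p) + ε / 2 := by
      calc ∫ y, f y ∂p ≤ ∫ y, (v n y + ε / 2) ∂p :=
            integral_mono hintf (hintv.add (integrable_const _))
              (fun y => by have := abs_le.1 (hn y); dsimp only; linarith [this.2])
      _ = (∫ y, v n y ∂p) + ε / 2 := by
            rw [integral_add hintv (integrable_const _)]; simp
    have h2 : (∫ y, v n y ∂q) - ε / 2 ≤ ∫ y, f y ∂q := by
      have hmono : (∫ y, (v n y - ε / 2) ∂q) ≤ ∫ y, f y ∂q :=
        integral_mono (hintv'.sub (integrable_const _)) hintf'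
          (fun y => by have := abs_le.1 (hn y); dsimp only; linarith [this.1])
      rw [integral_sub hintv' (integrable_const _)] at hmono
      simpa using hmono
    have h3 : (∫ y, f y ∂p) - ∫ y, f y ∂q ≤ ((∫ y, v n y ∂p) - ∫ y, v n y ∂q) + ε := by
      linarith
    exact h3.trans (add_le_add_left (le_ciSup hGbdd n) ε)
  -- the family g
  set g : ℕ → X → ℝ := fun n x => (∫ y, v n y ∂P x) - ∫ y, v n y ∂Q x with hgdef
  have g_meas : ∀ n, Measurable (g n) := by
    intro n
    have hsm : StronglyMeasurable (v n) := (hv_lip n).continuous.stronglyMeasurable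
    have h1 : Measurable fun x => ∫ y, v n y ∂P x :=
      (MeasureTheory.StronglyMeasurable.integral_kernel_prod_right'
        (κ := P) (hsm.comp_measurable measurable_snd)).measurable
    have h2 : Measurable fun x => ∫ y, v n y ∂Q x :=
      (MeasureTheory.StronglyMeasurable.integral_kernel_prod_right'
        (κ := Q) (hsm.comp_measurable measurable_snd)).measurable
    exact h1.sub h2
  have hW : ∀ x, wassersteinDual (P x) (Q x) = ⨆ n, g n x := fun x =>
    key (P x) (Q x) inferInstance inferInstance
  have hWmeas : Measurable (fun x => wassersteinDual (P x) (Q x)) := by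
    simp only [hW]
    exact Measurable.iSup g_meas
  refine ⟨hWmeas, ?_⟩
  -- bounds and integrability of W
  have hWge : ∀ x, 0 ≤ wassersteinDual (P x) (Q x) := fun x => WD.nonneg _ _
  have hWle : ∀ x, wassersteinDual (P x) (Q x) ≤ 2 * D := fun x => WD.le_two_diam _ _
  have hWint : Integrable (fun x => wassersteinDual (P x) (Q x)) ξ := by
    refine Integrable.mono' (integrable_const (2 * D)) hWmeas.aestronglyMeasurable
      (Filter.Eventually.of_forall fun x => ?_)
    rw [Real.norm_eq_abs, abs_le]
    exact ⟨by linarith [hWge x, hD0], hWle x⟩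
  -- main facts about admissible Φ
  have hmain : ∀ Φ : X × Y → ℝ, Measurable Φ →
      (∀ x, ∀ y₁ y₂, Φ (x, y₁) - Φ (x, y₂) ≤ dist y₁ y₂) →
      Integrable (fun x => (∫ y, Φ (x, y) ∂P x) - ∫ y, Φ (x, y) ∂Q x) ξ ∧
      ∀ x, (∫ y, Φ (x, y) ∂P x) - ∫ y, Φ (x, y) ∂Q x ≤ wassersteinDual (P x) (Q x) := by
    intro Φ hΦm hΦl
    have hle : ∀ x, (∫ y, Φ (x, y) ∂P x) - ∫ y, Φ (x, y) ∂Q x ≤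
        wassersteinDual (P x) (Q x) := fun x => WD.mem_le _ _ (hΦl x)
    have hge : ∀ x, -(2 * D) ≤ (∫ y, Φ (x, y) ∂P x) - ∫ y, Φ (x, y) ∂Q x := by
      intro x
      have := WD.bound (f := fun y => Φ (x, y)) (hΦl x) (Q x) (P x)
      linarith
    have hmeas : Measurable (fun x => (∫ y, Φ (x, y) ∂P x) - ∫ y, Φ (x, y) ∂Q x) := by
      have h1 : Measurable fun x => ∫ y, Φ (x, y) ∂P x :=
        (MeasureTheory.StronglyMeasurable.integral_kernel_prod_right'
          (κ := P) hΦm.stronglyMeasurable).measurable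
      have h2 : Measurable fun x => ∫ y, Φ (x, y) ∂Q x :=
        (MeasureTheory.StronglyMeasurable.integral_kernel_prod_right'
          (κ := Q) hΦm.stronglyMeasurable).measurable
      exact h1.sub h2
    refine ⟨?_, hle⟩
    refine Integrable.mono' (integrable_const (2 * D)) hmeas.aestronglyMeasurable
      (Filter.Eventually.of_forall fun x => ?_)
    rw [Real.norm_eq_abs, abs_le]
    exact ⟨hge x, (hle x).trans (hWle x)⟩
  -- the RHS set
  set T : Set ℝ := {r : ℝ | ∃ Φ : X × Y → ℝ, Measurable Φ ∧
    (∀ x, ∀ y₁ y₂, Φ (x, y₁) - Φ (x, y₂) ≤ dist y₁ y₂) ∧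
    r = ∫ x, ((∫ y, Φ (x, y) ∂(P x)) - ∫ y, Φ (x, y) ∂(Q x)) ∂ξ} with hTdef
  have hT0 : (0 : ℝ) ∈ T := by
    refine ⟨fun _ => 0, measurable_const, fun _ _ _ => by simpa using dist_nonneg, ?_⟩
    simp
  have hub : ∀ r ∈ T, r ≤ ∫ x, wassersteinDual (P x) (Q x) ∂ξ := by
    rintro r ⟨Φ, hΦm, hΦl, rfl⟩
    obtain ⟨hint, hle⟩ := hmain Φ hΦm hΦl
    exact integral_mono hint hWint hle
  have hTbdd : BddAbove T := ⟨_, hub⟩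
  refine le_antisymm ?_ (csSup_le ⟨0, hT0⟩ hub)
  -- hard direction
  refine le_of_forall_pos_le_add fun ε hε => ?_
  have hex : ∀ x, ∃ n, wassersteinDual (P x) (Q x) - ε < g n x := by
    intro x
    have h1 : wassersteinDual (P x) (Q x) - ε < ⨆ n, g n x := by
      rw [← hW x]; linarith
    exact exists_lt_of_lt_ciSup h1
  set N : X → ℕ := fun x => Nat.find (hex x) with hNdef
  have hNmeas : Measurable N :=
    measurable_find hex (fun n =>
      measurableSet_lt (hWmeas.sub measurable_const) (g_meas n))
  set Φ : X × Y → ℝ := fun z => v (N z.1) z.2 with hΦdef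
  have hΦm : Measurable Φ := by
    have hF : Measurable (fun w : Y × ℕ => v w.2 w.1) :=
      measurable_from_prod_countable_left fun n => (hv_lip n).continuous.measurable
    exact hF.comp (measurable_snd.prodMk (hNmeas.comp measurable_fst))
  have hΦl : ∀ x, ∀ y₁ y₂, Φ (x, y₁) - Φ (x, y₂) ≤ dist y₁ y₂ := fun x => hv_prop (N x)
  obtain ⟨hint, -⟩ := hmain Φ hΦm hΦl
  have hmem : (∫ x, ((∫ y, Φ (x, y) ∂P x) - ∫ y, Φ (x, y) ∂Q x) ∂ξ) ∈ T := ⟨Φ, hΦm, hΦl, rfl⟩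
  have hptwise : ∀ x, wassersteinDual (P x) (Q x) - ε ≤
      (∫ y, Φ (x, y) ∂P x) - ∫ y, Φ (x, y) ∂Q x := by
    intro x
    have := Nat.find_spec (hex x)
    exact this.le
  have hstep : (∫ x, wassersteinDual (P x) (Q x) ∂ξ) - ε ≤
      ∫ x, ((∫ y, Φ (x, y) ∂P x) - ∫ y, Φ (x, y) ∂Q x) ∂ξ := by
    have h1 : (∫ x, wassersteinDual (P x) (Q x) ∂ξ) - ε =
        ∫ x, (wassersteinDual (P x) (Q x) - ε) ∂ξ := by
      rw [integral_sub hWint (integrable_const _), integral_const]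
      simp
    rw [h1]
    exact integral_mono (hWint.sub (integrable_const _)) hint hptwise
  have := le_csSup hTbdd hmem
  linarith
end
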